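/- For any two n×n complex matrices B and C, the symmetrized Strang product converges to the exponential of the sum: lim_{N→∞} (e^{B/(2N)} e^{C/N} e^{B/(2N)})^N = e^{B+C}. -/

import Mathlib

open Matrix NormedSpace Filter Asymptotics Topology

section Aux

variable {E F : Type*} [NormedAddCommGroup E] [NormedSpace ℂ E]
  [NormedAddCommGroup F] [NormedSpace ℂ F]

lemma aux_inv_tendsto : Tendsto (fun N : ℕ => ((N : ℂ))⁻¹) atTop (𝓝 0) := by
  have h := (Complex.continuous_ofReal.tendsto 0).comp tendsto_inv_atTop_nhds_zero_nat
  simpa [Function.comp_def] using h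

lemma aux_tendsto_of_smul {u : ℕ → E} {x v : E}
    (hu : Tendsto (fun N : ℕ => (N : ℂ) • (u N - x)) atTop (𝓝 v)) :
    Tendsto u atTop (𝓝 x) := by
  have h0 : Tendsto (fun N : ℕ => ((N : ℂ))⁻¹ • ((N : ℂ) • (u N - x))) atTop
      (𝓝 ((0 : ℂ) • v)) := aux_inv_tendsto.smul hu
  have h1 : Tendsto (fun N : ℕ => u N - x) atTop (𝓝 0) := by
    rw [zero_smul] at h0
    refine h0.congr' ?_
    filter_upwards [eventually_ge_atTop 1] with N hN
    rw [smul_smul, inv_mul_cancel₀ (by exact_mod_cast Nat.one_le_iff_ne_zero.mp hN), one_smul]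
  simpa using h1.add_const x

lemma aux_fderiv_seq {g : E → F} {g' : E →L[ℂ] F} {x : E}
    (hg : HasFDerivAt g g' x) {u : ℕ → E} {v : E}
    (hu : Tendsto (fun N : ℕ => (N : ℂ) • (u N - x)) atTop (𝓝 v)) :
    Tendsto (fun N : ℕ => (N : ℂ) • (g (u N) - g x)) atTop (𝓝 (g' v)) := by
  have hux : Tendsto u atTop (𝓝 x) := aux_tendsto_of_smul hu
  have hO1 : (fun N : ℕ => (N : ℂ) • (u N - x)) =O[atTop] (fun _ : ℕ => (1 : ℝ)) :=
    hu.isBigO_one ℝ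
  have hcast : (fun N : ℕ => ((N : ℂ))⁻¹) =O[atTop] (fun N : ℕ => ((N : ℝ))⁻¹) := by
    refine isBigO_of_le _ fun N => ?_
    simp
  have hOinv : (fun N : ℕ => u N - x) =O[atTop] (fun N : ℕ => ((N : ℝ))⁻¹) := by
    refine (hcast.smul hO1).congr' ?_ ?_
    · filter_upwards [eventually_ge_atTop 1] with N hN
      rw [smul_smul, inv_mul_cancel₀ (by exact_mod_cast Nat.one_le_iff_ne_zero.mp hN), one_smul]
    · filter_upwards with N
      simp
  have hlo : (fun N : ℕ => g (u N) - g x - g' (u N - x)) =o[atTop] (fun N : ℕ => ((N : ℝ))⁻¹) :=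
    ((hg.isLittleO).comp_tendsto hux).trans_isBigO hOinv
  have hNO : (fun N : ℕ => (N : ℂ)) =O[atTop] (fun N : ℕ => (N : ℝ)) := by
    refine isBigO_of_le _ fun N => ?_
    simp
  have hNe : (fun N : ℕ => (N : ℂ) • (g (u N) - g x - g' (u N - x))) =o[atTop]
      (fun N : ℕ => (N : ℝ) • ((N : ℝ))⁻¹) := hNO.smul_isLittleO hlo
  have hone : (fun N : ℕ => (N : ℝ) • ((N : ℝ))⁻¹) =O[atTop] (fun _ : ℕ => (1 : ℝ)) := by
    refine IsBigO.of_bound 1 ?_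
    filter_upwards [eventually_ge_atTop 1] with N hN
    have : (N : ℝ) ≠ 0 := by exact_mod_cast Nat.one_le_iff_ne_zero.mp hN
    simp [smul_eq_mul, mul_inv_cancel₀ this]
  have h0 : Tendsto (fun N : ℕ => (N : ℂ) • (g (u N) - g x - g' (u N - x))) atTop (𝓝 0) :=
    (isLittleO_one_iff ℝ).mp (hNe.trans_isBigO hone)
  have h2 : Tendsto (fun N : ℕ => g' ((N : ℂ) • (u N - x))) atTop (𝓝 (g' v)) :=
    (g'.continuous.tendsto v).comp hu
  have := h0.add h2
  rw [zero_add] at this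
  refine this.congr fun N => ?_
  simp [smul_sub, _root_.map_smul]

lemma aux_pow_tendsto_exp {𝔸 : Type*} [NormedRing 𝔸] [NormedAlgebra ℂ 𝔸] [CompleteSpace 𝔸]
    {a : ℕ → 𝔸} {A : 𝔸} (h : Tendsto (fun N : ℕ => (N : ℂ) • (a N - 1)) atTop (𝓝 A)) :
    Tendsto (fun N : ℕ => a N ^ N) atTop (𝓝 (exp A)) := by
  letI : NormedAlgebra ℚ 𝔸 := NormedAlgebra.restrictScalars ℚ ℂ 𝔸
  have e0 : exp (0 : 𝔸) = 1 := exp_zero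
  have hexp : HasStrictFDerivAt (exp)
      ((ContinuousLinearEquiv.refl ℂ 𝔸 : 𝔸 ≃L[ℂ] 𝔸) : 𝔸 →L[ℂ] 𝔸) (0 : 𝔸) := by
    simpa [ContinuousLinearMap.one_def] using hasStrictFDerivAt_exp_zero (𝕂 := ℂ) (𝔸 := 𝔸)
  set L := hexp.localInverse _ _ _ with hLdef
  have hL1 : L 1 = 0 := by
    have := hexp.localInverse_apply_image
    rwa [e0] at this
  have hLd : HasFDerivAt L (1 : 𝔸 →L[ℂ] 𝔸) 1 := by
    have := hexp.to_localInverse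
    rw [e0] at this
    simpa [ContinuousLinearMap.one_def] using this.hasFDerivAt
  have ha1 : Tendsto a atTop (𝓝 1) := aux_tendsto_of_smul h
  have key : Tendsto (fun N : ℕ => (N : ℂ) • (L (a N) - L 1)) atTop
      (𝓝 ((1 : 𝔸 →L[ℂ] 𝔸) A)) := aux_fderiv_seq hLd h
  have key' : Tendsto (fun N : ℕ => (N : ℂ) • L (a N)) atTop (𝓝 A) := by
    simpa [hL1] using key
  have hev : ∀ᶠ N in atTop, exp (L (a N)) = a N := by
    have := hexp.eventually_right_inverse
    rw [e0] at this
    exact ha1.eventually this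
  have final : Tendsto (fun N : ℕ => exp ((N : ℂ) • L (a N))) atTop (𝓝 (exp A)) :=
    (exp_continuous.tendsto _).comp key'
  refine final.congr' ?_
  filter_upwards [hev] with N hN
  rw [Nat.cast_smul_eq_nsmul ℂ (N : ℕ) (L (a N)), NormedSpace.exp_nsmul, hN]

end Aux

/-- Strang product formula: `(e^{B/(2N)} e^{C/N} e^{B/(2N)})^N → e^{B+C}` as `N → ∞`. -/
theorem strang_product_formula {n : ℕ} (B C : Matrix (Fin n) (Fin n) ℂ) :
    Tendsto
      (fun N : ℕ =>
        (exp ((1 / (2 * (N : ℂ))) • B) * exp ((1 / (N : ℂ)) • C) *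
            exp ((1 / (2 * (N : ℂ))) • B)) ^ N)
      atTop (nhds (exp (B + C))) := by
  letI : SeminormedRing (Matrix (Fin n) (Fin n) ℂ) := Matrix.linftyOpSemiNormedRing
  letI : NormedRing (Matrix (Fin n) (Fin n) ℂ) := Matrix.linftyOpNormedRing
  letI : NormedAlgebra ℂ (Matrix (Fin n) (Fin n) ℂ) := Matrix.linftyOpNormedAlgebra
  set f : ℂ → Matrix (Fin n) (Fin n) ℂ := fun t =>
    exp (t • ((2 : ℂ)⁻¹ • B)) * exp (t • C) * exp (t • ((2 : ℂ)⁻¹ • B)) with hf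
  have h1 : HasDerivAt (fun t : ℂ => exp (t • ((2 : ℂ)⁻¹ • B))) ((2 : ℂ)⁻¹ • B) 0 := by
    have := hasDerivAt_exp_smul_const (𝕂 := ℂ) ((2 : ℂ)⁻¹ • B) 0
    simp only [zero_smul, exp_zero, one_mul] at this
    exact this
  have h2 : HasDerivAt (fun t : ℂ => exp (t • C)) C 0 := by
    have := hasDerivAt_exp_smul_const (𝕂 := ℂ) C 0
    simp only [zero_smul, exp_zero, one_mul] at this
    exact this
  have hg : HasDerivAt f (B + C) 0 := by
    have h3 := (h1.mul h2).mul h1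
    simp only [zero_smul, exp_zero, one_mul, mul_one] at h3
    convert h3 using 1
    · rfl
    · rfl
    · rfl
    · rfl
    · simp
      module
  have hu : Tendsto (fun N : ℕ => (N : ℂ) • (((N : ℂ))⁻¹ - 0)) atTop (𝓝 1) := by
    refine tendsto_const_nhds.congr' ?_
    filter_upwards [eventually_ge_atTop 1] with N hN
    rw [sub_zero, smul_eq_mul, mul_inv_cancel₀
      (by exact_mod_cast Nat.one_le_iff_ne_zero.mp hN)]
  have key : Tendsto (fun N : ℕ => (N : ℂ) • (f ((N : ℂ))⁻¹ - f 0)) atTop (𝓝 (B + C)) := by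
    have := aux_fderiv_seq hg.hasFDerivAt hu
    convert this using 2
    · rfl
    · exact (ContinuousLinearMap.toSpanSingleton_apply_one (R₁ := ℂ) (B + C)).symm
  have f0 : f 0 = 1 := by simp [hf]
  rw [f0] at key
  have main := aux_pow_tendsto_exp key
  refine main.congr fun N => ?_
  congr 1
  simp only [hf, smul_smul]
  congr 2 <;> congr 1 <;> simp only [one_div, mul_inv, mul_comm]
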